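/- Let X be a locally compact Hausdorff space and let λ be a set function from the compact subsets of X to [-∞,∞] that assumes at most one of the values ∞, -∞, is not identically ∞ or -∞, and is finitely additive on compact sets. Then λ⁺ and |λ| are superadditive: if (A_t)_{t∈T} is a pairwise disjoint family of sets, each open or closed, with at most one of the closed sets among them not compact, and ⊔_{t∈T} A_t ⊆ A where A is open or closed, then λ⁺(A) ≥ Σ_{t∈T} λ⁺(A_t) and |λ|(A) ≥ Σ_{t∈T} |λ|(A_t). -/

import Mathlib

open Set Classical
open scoped ENNReal NNReal

variable {X : Type*}

/-- The positive variation on an open set: `λ⁺(U) = sup{λ(K) : K ⊆ U, K compact}`. -/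
noncomputable def posVarOpen [TopologicalSpace X] (lam : Set X → EReal) (U : Set X) : EReal :=
  ⨆ (K : Set X) (_ : IsCompact K ∧ K ⊆ U), lam K

/-- The positive variation: the sup formula on open sets, and
`λ⁺(F) = inf{λ⁺(U) : F ⊆ U, U open}` on other (in particular closed) sets. -/
noncomputable def posVar [TopologicalSpace X] (lam : Set X → EReal) (A : Set X) : EReal :=
  if IsOpen A then posVarOpen lam A
  else ⨅ (U : Set X) (_ : IsOpen U ∧ A ⊆ U), posVarOpen lam U

/-- The total variation on an open set:
`|λ|(U) = sup{∑ᵢ |λ(Kᵢ)| : K₁, …, Kₙ pairwise disjoint compact subsets of U}`. -/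
noncomputable def totVarOpen [TopologicalSpace X] (lam : Set X → EReal) (U : Set X) : EReal :=
  ⨆ (n : ℕ) (K : Fin n → Set X)
    (_ : (∀ i, IsCompact (K i) ∧ K i ⊆ U) ∧ Pairwise (Function.onFun Disjoint K)),
      ∑ i, max (lam (K i)) (-(lam (K i)))

/-- The total variation: the sup formula on open sets, and
`|λ|(F) = inf{|λ|(U) : F ⊆ U, U open}` on other (in particular closed) sets. -/
noncomputable def totVar [TopologicalSpace X] (lam : Set X → EReal) (A : Set X) : EReal :=
  if IsOpen A then totVarOpen lam A
  else ⨅ (U : Set X) (_ : IsOpen U ∧ A ⊆ U), totVarOpen lam U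



set_option linter.unusedSectionVars false

noncomputable def eE (x : EReal) : ℝ≥0∞ := if x = ⊤ then ⊤ else ENNReal.ofReal x.toReal

lemma eE_coe (y : ℝ≥0∞) : eE (y : EReal) = y := by
  rcases eq_or_ne y ⊤ with rfl | hy
  · simp [eE]
  · rw [eE, if_neg (by simpa [EReal.coe_ennreal_eq_top_iff] using hy),
      EReal.toReal_coe_ennreal, ENNReal.ofReal_toReal hy]

lemma le_coe_eE (x : EReal) : x ≤ (eE x : EReal) := by
  induction x using EReal.rec with
  | bot => exact bot_le
  | coe r =>
      rw [eE, if_neg (by simp), EReal.toReal_coe, EReal.coe_ennreal_ofReal]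
      exact_mod_cast le_max_left r 0
  | top => simp [eE]

lemma eE_mono : Monotone eE := by
  intro x y h
  rcases eq_or_ne y ⊤ with rfl | hy
  · simp [eE]
  · have hx : x ≠ ⊤ := fun hx => hy (top_le_iff.1 (hx ▸ h))
    rw [eE, if_neg hx, eE, if_neg hy]
    rcases eq_or_ne x ⊥ with rfl | hx'
    · simp
    · exact ENNReal.ofReal_le_ofReal (EReal.toReal_le_toReal h hx' hy)

lemma eE_gc : GaloisConnection eE (fun y : ℝ≥0∞ => (y : EReal)) := by
  intro x y
  constructor
  · intro h
    exact (le_coe_eE x).trans (EReal.coe_ennreal_le_coe_ennreal_iff.2 h)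
  · intro h
    simpa [eE_coe] using eE_mono h

lemma coe_eE {x : EReal} (hx : 0 ≤ x) : (eE x : EReal) = x := by
  lift x to ℝ≥0∞ using hx
  rw [eE_coe]

lemma eE_add {x y : EReal} (hx : 0 ≤ x) (hy : 0 ≤ y) : eE (x + y) = eE x + eE y := by
  lift x to ℝ≥0∞ using hx; lift y to ℝ≥0∞ using hy
  rw [← EReal.coe_ennreal_add, eE_coe, eE_coe, eE_coe]

lemma eE_nonpos {x : EReal} (hx : x ≤ 0) : eE x = 0 := by
  refine le_antisymm ?_ zero_le
  have h0 : ((0 : ℝ≥0∞) : EReal) = 0 := EReal.coe_ennreal_zero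
  have h1 := eE_mono (hx.trans_eq h0.symm)
  rwa [eE_coe] at h1

lemma eE_zero : eE 0 = 0 := eE_nonpos le_rfl

lemma eE_sum {ι : Type*} (s : Finset ι) (f : ι → EReal) (hf : ∀ i ∈ s, 0 ≤ f i) :
    eE (∑ i ∈ s, f i) = ∑ i ∈ s, eE (f i) := by
  induction s using Finset.cons_induction with
  | empty => simp [eE_zero]
  | cons a s ha ih =>
      rw [Finset.sum_cons, Finset.sum_cons,
        eE_add (hf a (Finset.mem_cons_self _ _))
          (Finset.sum_nonneg fun i hi => hf i (Finset.mem_cons_of_mem hi)),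
        ih fun i hi => hf i (Finset.mem_cons_of_mem hi)]

lemma coe_eE_sum {ι : Type*} (s : Finset ι) (f : ι → ℝ≥0∞) :
    ((∑ i ∈ s, f i : ℝ≥0∞) : EReal) = ∑ i ∈ s, (f i : EReal) := by
  induction s using Finset.cons_induction with
  | empty => simp
  | cons a s ha ih => rw [Finset.sum_cons, Finset.sum_cons, EReal.coe_ennreal_add, ih]

lemma lam_empty [TopologicalSpace X] (lam : Set X → EReal)
    (hadd : ∀ C K : Set X, IsCompact C → IsCompact K → Disjoint C K →
      lam (C ∪ K) = lam C + lam K)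
    (hne : ∃ K : Set X, IsCompact K ∧ lam K ≠ ⊤ ∧ lam K ≠ ⊥) : lam ∅ = 0 := by
  obtain ⟨K, hK, hT, hB⟩ := hne
  have h := hadd K ∅ hK isCompact_empty (disjoint_empty _).symm.symm
  rw [Set.union_empty] at h
  set r := (lam K).toReal with hr
  have hKr : lam K = (r : EReal) := (EReal.coe_toReal hT hB).symm
  rw [hKr] at h
  generalize hlam : lam ∅ = s at h ⊢
  induction s using EReal.rec with
  | bot => rw [EReal.add_bot] at h; exact absurd h (EReal.coe_ne_bot r)
  | coe s =>
      rw [← EReal.coe_add] at h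
      have hrs : r = r + s := EReal.coe_injective h
      have : s = 0 := by linarith
      rw [this]; rfl
  | top => rw [EReal.coe_add_top] at h; exact absurd h (EReal.coe_ne_top r)


section PosVar

variable [TopologicalSpace X] [T2Space X] (lam : Set X → EReal)

noncomputable def pO (U : Set X) : ℝ≥0∞ :=
  ⨆ K : {K : Set X // IsCompact K ∧ K ⊆ U}, eE (lam K)

lemma pidx_nonempty (U : Set X) : Nonempty {K : Set X // IsCompact K ∧ K ⊆ U} :=
  ⟨⟨∅, isCompact_empty, empty_subset U⟩⟩

lemma eE_posVarOpen (U : Set X) : eE (posVarOpen lam U) = pO lam U := by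
  rw [posVarOpen, eE_gc.l_iSup]
  simp only [eE_gc.l_iSup]
  rw [pO]
  exact iSup_subtype' (p := fun K : Set X => IsCompact K ∧ K ⊆ U) (f := fun K _ => eE (lam K))

lemma posVarOpen_mono {U V : Set X} (h : U ⊆ V) : posVarOpen lam U ≤ posVarOpen lam V :=
  iSup₂_le fun K hK =>
    le_iSup₂ (f := fun (K : Set X) (_ : IsCompact K ∧ K ⊆ V) => lam K) K ⟨hK.1, hK.2.trans h⟩

lemma posVar_le {F U : Set X} (hU : IsOpen U) (hFU : F ⊆ U) :
    posVar lam F ≤ posVarOpen lam U := by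
  rw [posVar]; split_ifs with h
  · exact posVarOpen_mono lam hFU
  · exact iInf₂_le U ⟨hU, hFU⟩

variable (hadd : ∀ C K : Set X, IsCompact C → IsCompact K → Disjoint C K →
      lam (C ∪ K) = lam C + lam K)

include hadd in
lemma pair_le_pO {B C K : Set X} (hC : IsCompact C) (hK : IsCompact K)
    (hCB : C ⊆ B) (hKB : K ⊆ B) (hd : Disjoint C K) :
    eE (lam C) + eE (lam K) ≤ pO lam B := by
  rcases le_or_gt (lam C) 0 with h | h
  · rw [eE_nonpos h, zero_add]
    exact le_iSup (fun K : {K : Set X // IsCompact K ∧ K ⊆ B} => eE (lam K)) ⟨K, hK, hKB⟩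
  rcases le_or_gt (lam K) 0 with h' | h'
  · rw [eE_nonpos h', add_zero]
    exact le_iSup (fun K : {K : Set X // IsCompact K ∧ K ⊆ B} => eE (lam K)) ⟨C, hC, hCB⟩
  · rw [← eE_add h.le h'.le, ← hadd C K hC hK hd]
    exact le_iSup (fun K : {K : Set X // IsCompact K ∧ K ⊆ B} => eE (lam K))
      ⟨C ∪ K, hC.union hK, union_subset hCB hKB⟩

include hadd in
lemma pO_add_pO_le {U W B : Set X} (hUB : U ⊆ B) (hWB : W ⊆ B) (hUW : Disjoint U W) :
    pO lam U + pO lam W ≤ pO lam B := by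
  have := pidx_nonempty (X := X) U
  have := pidx_nonempty (X := X) W
  exact ENNReal.iSup_add_iSup_le fun i j =>
    pair_le_pO lam hadd i.2.1 j.2.1 (i.2.2.trans hUB) (j.2.2.trans hWB)
      (hUW.mono i.2.2 j.2.2)

include hadd in
lemma closed_peel {F B : Set X} (hF : IsClosed F) (hB : IsOpen B) (hFB : F ⊆ B) :
    eE (posVar lam F) + pO lam (B \ F) ≤ pO lam B := by
  have := pidx_nonempty (X := X) (B \ F)
  rw [pO, ENNReal.add_iSup]
  refine iSup_le fun C => ?_
  obtain ⟨C, hC, hCBF⟩ := C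
  have h1 : eE (posVar lam F) ≤ pO lam (B \ C) := by
    rw [← eE_posVarOpen]
    refine eE_mono (posVar_le lam (hB.sdiff hC.isClosed) (subset_diff.2 ⟨hFB, ?_⟩))
    exact (disjoint_sdiff_left.mono_left hCBF).symm
  calc eE (posVar lam F) + eE (lam C) ≤ pO lam (B \ C) + eE (lam C) :=
        add_le_add_left h1 _
    _ ≤ pO lam B := by
        have := pidx_nonempty (X := X) (B \ C)
        rw [pO, ENNReal.iSup_add]
        refine iSup_le fun K => ?_
        obtain ⟨K, hK, hKBC⟩ := K
        exact pair_le_pO lam hadd hK hC (hKBC.trans diff_subset) (hCBF.trans diff_subset)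
          (disjoint_sdiff_left.mono_left hKBC)

end PosVar

section PosVar2

variable [TopologicalSpace X] [T2Space X] (lam : Set X → EReal)
variable (hadd : ∀ C K : Set X, IsCompact C → IsCompact K → Disjoint C K →
      lam (C ∪ K) = lam C + lam K)

include hadd in
lemma closed_finsum {T : Type*} (A : T → Set X) (F : Finset T) :
    ∀ B : Set X, IsOpen B → (∀ t ∈ F, IsClosed (A t)) →
      (↑F : Set T).Pairwise (Function.onFun Disjoint A) → (∀ t ∈ F, A t ⊆ B) →
      ∑ t ∈ F, eE (posVar lam (A t)) + pO lam (B \ ⋃ t ∈ F, A t) ≤ pO lam B := by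
  classical
  induction F using Finset.induction_on with
  | empty => intro B hB _ _ _; simp
  | insert _ _ ha ih =>
      rename_i a F
      intro B hB hcl hpw hsub
      have haF : a ∈ insert a F := Finset.mem_insert_self a F
      have hBa : IsOpen (B \ A a) := hB.sdiff (hcl a haF)
      have hsub' : ∀ t ∈ F, A t ⊆ B \ A a := by
        intro t ht
        refine subset_diff.2 ⟨hsub t (Finset.mem_insert_of_mem ht), ?_⟩
        exact hpw (Finset.mem_coe.2 (Finset.mem_insert_of_mem ht)) (Finset.mem_coe.2 haF)
          (fun h => ha (h ▸ ht))
      have ihh := ih (B \ A a) hBa (fun t ht => hcl t (Finset.mem_insert_of_mem ht))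
        (hpw.mono (by exact_mod_cast Finset.subset_insert a F)) hsub'
      have hset : (B \ A a) \ ⋃ t ∈ F, A t = B \ ⋃ t ∈ insert a F, A t := by
        rw [Finset.set_biUnion_insert, diff_diff]
      rw [hset] at ihh
      calc ∑ t ∈ insert a F, eE (posVar lam (A t)) + pO lam (B \ ⋃ t ∈ insert a F, A t)
          = eE (posVar lam (A a)) +
            (∑ t ∈ F, eE (posVar lam (A t)) + pO lam (B \ ⋃ t ∈ insert a F, A t)) := by
            rw [Finset.sum_insert ha, add_assoc]
        _ ≤ eE (posVar lam (A a)) + pO lam (B \ A a) := add_le_add_right ihh _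
        _ ≤ pO lam B := closed_peel lam hadd (hcl a haF) hB (hsub a haF)

include hadd in
lemma open_finsum {T : Type*} (A : T → Set X) (F : Finset T) :
    ∀ V : Set X, (↑F : Set T).Pairwise (Function.onFun Disjoint A) → (∀ t ∈ F, A t ⊆ V) →
      ∑ t ∈ F, pO lam (A t) ≤ pO lam V := by
  classical
  induction F using Finset.induction_on with
  | empty => intro V _ _; simp
  | insert _ _ ha ih =>
      rename_i a F
      intro V hpw hsub
      have haF : a ∈ insert a F := Finset.mem_insert_self a F
      have h1 : ∑ t ∈ F, pO lam (A t) ≤ pO lam (⋃ t ∈ F, A t) :=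
        ih _ (hpw.mono (by exact_mod_cast Finset.subset_insert a F))
          (fun t ht => subset_biUnion_of_mem (u := A) ht)
      have hd : Disjoint (A a) (⋃ t ∈ F, A t) := by
        rw [disjoint_left]
        intro x hx hx'
        obtain ⟨t, ht, hxt⟩ := mem_iUnion₂.1 hx'
        exact (hpw (Finset.mem_coe.2 haF) (Finset.mem_coe.2 (Finset.mem_insert_of_mem ht))
          (fun h => ha (h ▸ ht))).le_bot ⟨hx, hxt⟩
      rw [Finset.sum_insert ha]
      exact le_trans (add_le_add_right h1 _)
        (pO_add_pO_le lam hadd (hsub a haF)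
          (iUnion₂_subset fun t ht => hsub t (Finset.mem_insert_of_mem ht)) hd)

include hadd in
lemma main_open {T : Type*} (A : T → Set X) (hoc : ∀ t, IsOpen (A t) ∨ IsClosed (A t))
    (hdisj : Pairwise (Function.onFun Disjoint A)) {B : Set X} (hB : IsOpen B)
    (hsub : ∀ t, A t ⊆ B) (S : Finset T) :
    ∑ t ∈ S, eE (posVar lam (A t)) ≤ pO lam B := by
  classical
  set Sc := S.filter (fun t => ¬ IsOpen (A t)) with hSc
  set So := S.filter (fun t => IsOpen (A t)) with hSo
  have hsplit : ∑ t ∈ S, eE (posVar lam (A t))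
      = ∑ t ∈ So, eE (posVar lam (A t)) + ∑ t ∈ Sc, eE (posVar lam (A t)) :=
    (Finset.sum_filter_add_sum_filter_not S _ _).symm
  have h1 : ∑ t ∈ Sc, eE (posVar lam (A t)) + pO lam (B \ ⋃ t ∈ Sc, A t) ≤ pO lam B :=
    closed_finsum lam hadd A Sc B hB
      (fun t ht => (hoc t).resolve_left (Finset.mem_filter.1 ht).2)
      (hdisj.set_pairwise _) (fun t _ => hsub t)
  have h2 : ∑ t ∈ So, eE (posVar lam (A t)) ≤ pO lam (B \ ⋃ t ∈ Sc, A t) := by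
    have heq : ∀ t ∈ So, eE (posVar lam (A t)) = pO lam (A t) := by
      intro t ht
      rw [posVar, if_pos (Finset.mem_filter.1 ht).2, eE_posVarOpen]
    rw [Finset.sum_congr rfl heq]
    refine open_finsum lam hadd A So _ (hdisj.set_pairwise _) ?_
    intro t ht
    refine subset_diff.2 ⟨hsub t, ?_⟩
    rw [disjoint_left]
    intro x hx hx'
    obtain ⟨s, hs, hxs⟩ := mem_iUnion₂.1 hx'
    have hts : t ≠ s := by
      rintro rfl
      exact (Finset.mem_filter.1 hs).2 (Finset.mem_filter.1 ht).2
    exact (hdisj hts).le_bot ⟨hx, hxs⟩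
  calc ∑ t ∈ S, eE (posVar lam (A t))
      = ∑ t ∈ So, eE (posVar lam (A t)) + ∑ t ∈ Sc, eE (posVar lam (A t)) := hsplit
    _ ≤ pO lam (B \ ⋃ t ∈ Sc, A t) + ∑ t ∈ Sc, eE (posVar lam (A t)) := add_le_add_left h2 _
    _ = ∑ t ∈ Sc, eE (posVar lam (A t)) + pO lam (B \ ⋃ t ∈ Sc, A t) := add_comm _ _
    _ ≤ pO lam B := h1

end PosVar2


section PosVar3

variable [TopologicalSpace X] [T2Space X] (lam : Set X → EReal)
variable (hadd : ∀ C K : Set X, IsCompact C → IsCompact K → Disjoint C K →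
      lam (C ∪ K) = lam C + lam K)

lemma posVarOpen_nonneg (h0 : lam ∅ = 0) (U : Set X) : 0 ≤ posVarOpen lam U := by
  have : lam ∅ ≤ posVarOpen lam U :=
    le_iSup₂ (f := fun (K : Set X) (_ : IsCompact K ∧ K ⊆ U) => lam K) ∅
      ⟨isCompact_empty, empty_subset U⟩
  rwa [h0] at this

include hadd in
lemma final_pos (h0 : lam ∅ = 0) {T : Type*} (A : T → Set X)
    (hoc : ∀ t, IsOpen (A t) ∨ IsClosed (A t))
    (hdisj : Pairwise (Function.onFun Disjoint A)) {B : Set X}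
    (hsub : (⋃ t, A t) ⊆ B) :
    (⨆ S : Finset T, ∑ t ∈ S, posVar lam (A t)) ≤ posVar lam B := by
  refine iSup_le fun S => ?_
  have hstep : ∑ t ∈ S, posVar lam (A t)
      ≤ ((∑ t ∈ S, eE (posVar lam (A t)) : ℝ≥0∞) : EReal) := by
    rw [coe_eE_sum]
    exact Finset.sum_le_sum fun t _ => le_coe_eE _
  refine hstep.trans ?_
  by_cases hB : IsOpen B
  · rw [posVar, if_pos hB, ← coe_eE (posVarOpen_nonneg lam h0 B), eE_posVarOpen]
    exact EReal.coe_ennreal_le_coe_ennreal_iff.2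
      (main_open lam hadd A hoc hdisj hB (fun t => (subset_iUnion A t).trans hsub) S)
  · rw [posVar, if_neg hB]
    refine le_iInf₂ fun U hU => ?_
    rw [← coe_eE (posVarOpen_nonneg lam h0 U), eE_posVarOpen]
    exact EReal.coe_ennreal_le_coe_ennreal_iff.2
      (main_open lam hadd A hoc hdisj hU.1
        (fun t => ((subset_iUnion A t).trans hsub).trans hU.2) S)

end PosVar3


section TotVar

variable [TopologicalSpace X] [T2Space X] (lam : Set X → EReal)

/-- `|λ(K)|`. -/
noncomputable def msr (K : Set X) : EReal := max (lam K) (-(lam K))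

lemma msr_nonneg (K : Set X) : 0 ≤ msr lam K := by
  rcases le_total 0 (lam K) with h | h
  · exact h.trans (le_max_left _ _)
  · have : (0 : EReal) ≤ -(lam K) := by
      rw [show (0 : EReal) = -0 by simp, EReal.neg_le_neg_iff]; exact h
    exact this.trans (le_max_right _ _)

/-- The property defining an admissible family for `totVarOpen`. -/
def tIdxP (U : Set X) (p : Σ n : ℕ, Fin n → Set X) : Prop :=
  (∀ i, IsCompact (p.2 i) ∧ p.2 i ⊆ U) ∧ Pairwise (Function.onFun Disjoint p.2)

noncomputable def tO (U : Set X) : ℝ≥0∞ :=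
  ⨆ p : {p : Σ n : ℕ, Fin n → Set X // tIdxP U p}, ∑ i, eE (msr lam (p.1.2 i))

lemma tidx_nonempty (U : Set X) : Nonempty {p : Σ n : ℕ, Fin n → Set X // tIdxP U p} :=
  ⟨⟨⟨0, Fin.elim0⟩, fun i => i.elim0, fun i => i.elim0⟩⟩

lemma eE_totVarOpen (U : Set X) : eE (totVarOpen lam U) = tO lam U := by
  refine le_antisymm ?_ ?_
  · rw [eE_gc _ _]
    refine iSup_le fun n => iSup_le fun K => iSup_le fun h => ?_
    have h1 : ∑ i, max (lam (K i)) (-(lam (K i))) ≤ ∑ i, ((eE (msr lam (K i)) : ℝ≥0∞) : EReal) :=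
      Finset.sum_le_sum fun i _ => le_coe_eE _
    refine h1.trans ?_
    rw [← coe_eE_sum]
    refine EReal.coe_ennreal_le_coe_ennreal_iff.2 ?_
    exact le_iSup (fun p : {p : Σ n : ℕ, Fin n → Set X // tIdxP U p} =>
      ∑ i, eE (msr lam (p.1.2 i))) ⟨⟨n, K⟩, h⟩
  · refine iSup_le fun p => ?_
    obtain ⟨⟨n, K⟩, h⟩ := p
    rw [← eE_sum Finset.univ _ (fun i _ => msr_nonneg lam (K i))]
    refine eE_mono ?_
    exact le_iSup_of_le n (le_iSup_of_le K (le_iSup_of_le h le_rfl))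

lemma totVarOpen_mono {U V : Set X} (h : U ⊆ V) : totVarOpen lam U ≤ totVarOpen lam V := by
  refine iSup_le fun n => iSup_le fun K => iSup_le fun hK => ?_
  exact le_iSup_of_le n (le_iSup_of_le K
    (le_iSup_of_le ⟨fun i => ⟨(hK.1 i).1, (hK.1 i).2.trans h⟩, hK.2⟩ le_rfl))

lemma totVar_le {F U : Set X} (hU : IsOpen U) (hFU : F ⊆ U) :
    totVar lam F ≤ totVarOpen lam U := by
  rw [totVar]; split_ifs with h
  · exact totVarOpen_mono lam hFU
  · exact iInf₂_le U ⟨hU, hFU⟩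

lemma totVarOpen_nonneg (U : Set X) : 0 ≤ totVarOpen lam U := by
  refine le_iSup_of_le 0 (le_iSup_of_le Fin.elim0
    (le_iSup_of_le ⟨fun i => i.elim0, fun i => i.elim0⟩ ?_))
  simp

/-- Combining two mutually disjoint admissible families. -/
lemma tcomb {B : Set X} {n m : ℕ} {K : Fin n → Set X} {L : Fin m → Set X}
    (hK : ∀ i, IsCompact (K i) ∧ K i ⊆ B) (hKpw : Pairwise (Function.onFun Disjoint K))
    (hL : ∀ j, IsCompact (L j) ∧ L j ⊆ B) (hLpw : Pairwise (Function.onFun Disjoint L))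
    (hKL : ∀ i j, Disjoint (K i) (L j)) :
    ∑ i, eE (msr lam (K i)) + ∑ j, eE (msr lam (L j)) ≤ tO lam B := by
  set M : Fin (n + m) → Set X := fun i => Sum.elim K L (finSumFinEquiv.symm i) with hM
  have hMc : ∀ i, IsCompact (M i) ∧ M i ⊆ B := by
    intro i
    rcases h : finSumFinEquiv.symm i with a | b
    · simpa [hM, h] using hK a
    · simpa [hM, h] using hL b
  have hMpw : Pairwise (Function.onFun Disjoint M) := by
    intro i j hij
    have hne : finSumFinEquiv.symm i ≠ finSumFinEquiv.symm j :=
      fun h => hij (finSumFinEquiv.symm.injective h)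
    rcases h1 : finSumFinEquiv.symm i with a | b <;> rcases h2 : finSumFinEquiv.symm j with c | d <;>
      simp only [Function.onFun, hM, h1, h2, Sum.elim_inl, Sum.elim_inr]
    · exact hKpw fun h => hne (by rw [h1, h2, h])
    · exact hKL a d
    · exact (hKL c b).symm
    · exact hLpw fun h => hne (by rw [h1, h2, h])
  have hsum : ∑ i, eE (msr lam (M i)) = ∑ i, eE (msr lam (K i)) + ∑ j, eE (msr lam (L j)) := by
    have h1 : ∑ i, eE (msr lam (M i)) = ∑ s : Fin n ⊕ Fin m, eE (msr lam (Sum.elim K L s)) := by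
      refine (Fintype.sum_equiv finSumFinEquiv _ _ fun s => ?_).symm
      simp [hM]
    rw [h1, Fintype.sum_sum_type]
    simp
  rw [← hsum]
  exact le_iSup (fun p : {p : Σ n : ℕ, Fin n → Set X // tIdxP B p} =>
    ∑ i, eE (msr lam (p.1.2 i))) ⟨⟨n + m, M⟩, hMc, hMpw⟩

lemma tO_add_tO_le {U W B : Set X} (hUB : U ⊆ B) (hWB : W ⊆ B) (hUW : Disjoint U W) :
    tO lam U + tO lam W ≤ tO lam B := by
  have := tidx_nonempty (X := X) U
  have := tidx_nonempty (X := X) W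
  refine ENNReal.iSup_add_iSup_le fun p q => ?_
  exact tcomb lam (fun i => ⟨(p.2.1 i).1, (p.2.1 i).2.trans hUB⟩) p.2.2
    (fun j => ⟨(q.2.1 j).1, (q.2.1 j).2.trans hWB⟩) q.2.2
    (fun i j => hUW.mono (p.2.1 i).2 (q.2.1 j).2)

lemma closed_peel_t {F B : Set X} (hF : IsClosed F) (hB : IsOpen B) (hFB : F ⊆ B) :
    eE (totVar lam F) + tO lam (B \ F) ≤ tO lam B := by
  have := tidx_nonempty (X := X) (B \ F)
  rw [tO, ENNReal.add_iSup]
  refine iSup_le fun q => ?_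
  obtain ⟨⟨m, L⟩, hL, hLpw⟩ := q
  set C : Set X := ⋃ j, L j with hC
  have hCc : IsCompact C := isCompact_iUnion fun j => (hL j).1
  have hBC : IsOpen (B \ C) := hB.sdiff hCc.isClosed
  have h1 : eE (totVar lam F) ≤ tO lam (B \ C) := by
    rw [← eE_totVarOpen]
    refine eE_mono (totVar_le lam hBC (subset_diff.2 ⟨hFB, ?_⟩))
    rw [disjoint_left]
    intro x hx hx'
    obtain ⟨j, hj⟩ := mem_iUnion.1 hx'
    exact ((hL j).2 hj).2 hx
  refine le_trans (add_le_add_left h1 _) ?_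
  have := tidx_nonempty (X := X) (B \ C)
  rw [tO, ENNReal.iSup_add]
  refine iSup_le fun p => ?_
  obtain ⟨⟨n, K⟩, hKc, hKpw⟩ := p
  refine tcomb lam (fun i => ⟨(hKc i).1, (hKc i).2.trans diff_subset⟩) hKpw
    (fun j => ⟨(hL j).1, ((hL j).2).trans diff_subset⟩) hLpw ?_
  intro i j
  refine Disjoint.mono_right (subset_iUnion L j) ?_
  exact disjoint_sdiff_left.mono_left (hKc i).2

end TotVar

section TotVar2

variable [TopologicalSpace X] [T2Space X] (lam : Set X → EReal)

lemma closed_finsum_t {T : Type*} (A : T → Set X) (F : Finset T) :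
    ∀ B : Set X, IsOpen B → (∀ t ∈ F, IsClosed (A t)) →
      (↑F : Set T).Pairwise (Function.onFun Disjoint A) → (∀ t ∈ F, A t ⊆ B) →
      ∑ t ∈ F, eE (totVar lam (A t)) + tO lam (B \ ⋃ t ∈ F, A t) ≤ tO lam B := by
  classical
  induction F using Finset.induction_on with
  | empty => intro B hB _ _ _; simp
  | insert _ _ ha ih =>
      rename_i a F
      intro B hB hcl hpw hsub
      have haF : a ∈ insert a F := Finset.mem_insert_self a F
      have hBa : IsOpen (B \ A a) := hB.sdiff (hcl a haF)
      have hsub' : ∀ t ∈ F, A t ⊆ B \ A a := by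
        intro t ht
        refine subset_diff.2 ⟨hsub t (Finset.mem_insert_of_mem ht), ?_⟩
        exact hpw (Finset.mem_coe.2 (Finset.mem_insert_of_mem ht)) (Finset.mem_coe.2 haF)
          (fun h => ha (h ▸ ht))
      have ihh := ih (B \ A a) hBa (fun t ht => hcl t (Finset.mem_insert_of_mem ht))
        (hpw.mono (by exact_mod_cast Finset.subset_insert a F)) hsub'
      have hset : (B \ A a) \ ⋃ t ∈ F, A t = B \ ⋃ t ∈ insert a F, A t := by
        rw [Finset.set_biUnion_insert, diff_diff]
      rw [hset] at ihh
      calc ∑ t ∈ insert a F, eE (totVar lam (A t)) + tO lam (B \ ⋃ t ∈ insert a F, A t)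
          = eE (totVar lam (A a)) +
            (∑ t ∈ F, eE (totVar lam (A t)) + tO lam (B \ ⋃ t ∈ insert a F, A t)) := by
            rw [Finset.sum_insert ha, add_assoc]
        _ ≤ eE (totVar lam (A a)) + tO lam (B \ A a) := add_le_add_right ihh _
        _ ≤ tO lam B := closed_peel_t lam (hcl a haF) hB (hsub a haF)

lemma open_finsum_t {T : Type*} (A : T → Set X) (F : Finset T) :
    ∀ V : Set X, (↑F : Set T).Pairwise (Function.onFun Disjoint A) → (∀ t ∈ F, A t ⊆ V) →
      ∑ t ∈ F, tO lam (A t) ≤ tO lam V := by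
  classical
  induction F using Finset.induction_on with
  | empty => intro V _ _; simp
  | insert _ _ ha ih =>
      rename_i a F
      intro V hpw hsub
      have haF : a ∈ insert a F := Finset.mem_insert_self a F
      have h1 : ∑ t ∈ F, tO lam (A t) ≤ tO lam (⋃ t ∈ F, A t) :=
        ih _ (hpw.mono (by exact_mod_cast Finset.subset_insert a F))
          (fun t ht => subset_biUnion_of_mem (u := A) ht)
      have hd : Disjoint (A a) (⋃ t ∈ F, A t) := by
        rw [disjoint_left]
        intro x hx hx'
        obtain ⟨t, ht, hxt⟩ := mem_iUnion₂.1 hx'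
        exact (hpw (Finset.mem_coe.2 haF) (Finset.mem_coe.2 (Finset.mem_insert_of_mem ht))
          (fun h => ha (h ▸ ht))).le_bot ⟨hx, hxt⟩
      rw [Finset.sum_insert ha]
      exact le_trans (add_le_add_right h1 _)
        (tO_add_tO_le lam (hsub a haF)
          (iUnion₂_subset fun t ht => hsub t (Finset.mem_insert_of_mem ht)) hd)

lemma main_open_t {T : Type*} (A : T → Set X) (hoc : ∀ t, IsOpen (A t) ∨ IsClosed (A t))
    (hdisj : Pairwise (Function.onFun Disjoint A)) {B : Set X} (hB : IsOpen B)
    (hsub : ∀ t, A t ⊆ B) (S : Finset T) :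
    ∑ t ∈ S, eE (totVar lam (A t)) ≤ tO lam B := by
  classical
  set Sc := S.filter (fun t => ¬ IsOpen (A t)) with hSc
  set So := S.filter (fun t => IsOpen (A t)) with hSo
  have hsplit : ∑ t ∈ S, eE (totVar lam (A t))
      = ∑ t ∈ So, eE (totVar lam (A t)) + ∑ t ∈ Sc, eE (totVar lam (A t)) :=
    (Finset.sum_filter_add_sum_filter_not S _ _).symm
  have h1 : ∑ t ∈ Sc, eE (totVar lam (A t)) + tO lam (B \ ⋃ t ∈ Sc, A t) ≤ tO lam B :=
    closed_finsum_t lam A Sc B hB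
      (fun t ht => (hoc t).resolve_left (Finset.mem_filter.1 ht).2)
      (hdisj.set_pairwise _) (fun t _ => hsub t)
  have h2 : ∑ t ∈ So, eE (totVar lam (A t)) ≤ tO lam (B \ ⋃ t ∈ Sc, A t) := by
    have heq : ∀ t ∈ So, eE (totVar lam (A t)) = tO lam (A t) := by
      intro t ht
      rw [totVar, if_pos (Finset.mem_filter.1 ht).2, eE_totVarOpen]
    rw [Finset.sum_congr rfl heq]
    refine open_finsum_t lam A So _ (hdisj.set_pairwise _) ?_
    intro t ht
    refine subset_diff.2 ⟨hsub t, ?_⟩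
    rw [disjoint_left]
    intro x hx hx'
    obtain ⟨s, hs, hxs⟩ := mem_iUnion₂.1 hx'
    have hts : t ≠ s := by
      rintro rfl
      exact (Finset.mem_filter.1 hs).2 (Finset.mem_filter.1 ht).2
    exact (hdisj hts).le_bot ⟨hx, hxs⟩
  calc ∑ t ∈ S, eE (totVar lam (A t))
      = ∑ t ∈ So, eE (totVar lam (A t)) + ∑ t ∈ Sc, eE (totVar lam (A t)) := hsplit
    _ ≤ tO lam (B \ ⋃ t ∈ Sc, A t) + ∑ t ∈ Sc, eE (totVar lam (A t)) := add_le_add_left h2 _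
    _ = ∑ t ∈ Sc, eE (totVar lam (A t)) + tO lam (B \ ⋃ t ∈ Sc, A t) := add_comm _ _
    _ ≤ tO lam B := h1

lemma final_tot {T : Type*} (A : T → Set X)
    (hoc : ∀ t, IsOpen (A t) ∨ IsClosed (A t))
    (hdisj : Pairwise (Function.onFun Disjoint A)) {B : Set X}
    (hsub : (⋃ t, A t) ⊆ B) :
    (⨆ S : Finset T, ∑ t ∈ S, totVar lam (A t)) ≤ totVar lam B := by
  refine iSup_le fun S => ?_
  have hstep : ∑ t ∈ S, totVar lam (A t)
      ≤ ((∑ t ∈ S, eE (totVar lam (A t)) : ℝ≥0∞) : EReal) := by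
    rw [coe_eE_sum]
    exact Finset.sum_le_sum fun t _ => le_coe_eE _
  refine hstep.trans ?_
  by_cases hB : IsOpen B
  · rw [totVar, if_pos hB, ← coe_eE (totVarOpen_nonneg lam B), eE_totVarOpen]
    exact EReal.coe_ennreal_le_coe_ennreal_iff.2
      (main_open_t lam A hoc hdisj hB (fun t => (subset_iUnion A t).trans hsub) S)
  · rw [totVar, if_neg hB]
    refine le_iInf₂ fun U hU => ?_
    rw [← coe_eE (totVarOpen_nonneg lam U), eE_totVarOpen]
    exact EReal.coe_ennreal_le_coe_ennreal_iff.2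
      (main_open_t lam A hoc hdisj hU.1
        (fun t => ((subset_iUnion A t).trans hsub).trans hU.2) S)

end TotVar2


/-- Lemma 2.2 (s9): `λ⁺` and `|λ|` are superadditive: if `(A_t)_{t ∈ T}` is a pairwise
disjoint family of sets, each open or closed, with at most one of the closed sets among them
not compact, and `⊔_{t∈T} A_t ⊆ A` with `A` open or closed, then
`λ⁺(A) ≥ ∑_{t∈T} λ⁺(A_t)` and `|λ|(A) ≥ ∑_{t∈T} |λ|(A_t)` (the sums of these nonnegative
terms being the suprema of their finite subsums). -/
theorem posVar_totVar_superadditive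
    [TopologicalSpace X] [LocallyCompactSpace X] [T2Space X]
    (lam : Set X → EReal)
    (hadd : ∀ C K : Set X, IsCompact C → IsCompact K → Disjoint C K →
      lam (C ∪ K) = lam C + lam K)
    (hone : (∀ K : Set X, IsCompact K → lam K ≠ ⊤) ∨ (∀ K : Set X, IsCompact K → lam K ≠ ⊥))
    (hne : ∃ K : Set X, IsCompact K ∧ lam K ≠ ⊤ ∧ lam K ≠ ⊥)
    {T : Type*} (A : T → Set X) (B : Set X)
    (hoc : ∀ t, IsOpen (A t) ∨ IsClosed (A t))
    (hdisj : Pairwise (Function.onFun Disjoint A))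
    (honcp : {t : T | IsClosed (A t) ∧ ¬ IsCompact (A t)}.Subsingleton)
    (hBoc : IsOpen B ∨ IsClosed B)
    (hsub : (⋃ t, A t) ⊆ B) :
    (⨆ S : Finset T, ∑ t ∈ S, posVar lam (A t)) ≤ posVar lam B ∧
    (⨆ S : Finset T, ∑ t ∈ S, totVar lam (A t)) ≤ totVar lam B := by
  have h0 : lam ∅ = 0 := lam_empty lam hadd hne
  exact ⟨final_pos lam hadd h0 A hoc hdisj hsub, final_tot lam A hoc hdisj hsub⟩
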